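/- Without any causal assumptions, the g-formula and weighting representations coincide as observed-data functionals: for any random variables (X, A, Y, R) satisfying positivity, Σ_x ℙ(X = x | R = false) · E[Y | X = x, A = a, R = true] = (1/ℙ(R = false)) · E[ (ℙ(R = false | X = X(ω)) · 1{R = true, A = a}(ω) / (ℙ(A = a | X = X(ω), R = true) · ℙ(R = true | X = X(ω)))) · Y(ω) ], where the sum runs over x with ℙ(X = x, R = false) > 0. -/

import Mathlib

open Finset

attribute [local instance] Classical.propDecidable

variable {Ω : Type*}

/-- Probability of an event. -/
noncomputable def pr [Fintype Ω] (P : Ω → ℝ) (E : Ω → Prop) : ℝ :=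
  ∑ ω, if E ω then P ω else 0

/-- Expectation of a real random variable. -/
noncomputable def ex [Fintype Ω] (P : Ω → ℝ) (Z : Ω → ℝ) : ℝ :=
  ∑ ω, P ω * Z ω

/-- Conditional probability ℙ(F | E) = ℙ(F ∩ E)/ℙ(E). -/
noncomputable def cpr [Fintype Ω] (P : Ω → ℝ) (F E : Ω → Prop) : ℝ :=
  pr P (fun ω => F ω ∧ E ω) / pr P E

/-- Conditional expectation E[Z | E] = E[Z·1_E]/ℙ(E). -/
noncomputable def cex [Fintype Ω] (P : Ω → ℝ) (Z : Ω → ℝ) (E : Ω → Prop) : ℝ :=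
  (∑ ω, if E ω then P ω * Z ω else 0) / pr P E

lemma pr_nonneg [Fintype Ω] (P : Ω → ℝ) (hP0 : ∀ ω, 0 ≤ P ω) (E : Ω → Prop) :
    0 ≤ pr P E := by
  apply Finset.sum_nonneg; intro ω _; split <;> simp [hP0 ω]

lemma pr_congr [Fintype Ω] (P : Ω → ℝ) {E F : Ω → Prop} (h : ∀ ω, E ω ↔ F ω) :
    pr P E = pr P F :=
  Finset.sum_congr rfl fun ω _ => by rw [h ω]

lemma pr_mono [Fintype Ω] (P : Ω → ℝ) (hP0 : ∀ ω, 0 ≤ P ω) {E F : Ω → Prop}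
    (h : ∀ ω, E ω → F ω) : pr P E ≤ pr P F := by
  apply Finset.sum_le_sum; intro ω _
  by_cases hE : E ω
  · simp [hE, h ω hE]
  · simp only [hE, if_false]
    split <;> simp [hP0 ω]

lemma le_pr [Fintype Ω] (P : Ω → ℝ) (hP0 : ∀ ω, 0 ≤ P ω) {E : Ω → Prop} (ω : Ω)
    (h : E ω) : P ω ≤ pr P E := by
  have := Finset.single_le_sum (f := fun ω => if E ω then P ω else 0)
    (fun i _ => by split <;> simp [hP0 i]) (Finset.mem_univ ω)
  simpa [h, pr] using this

/-- Without causal assumptions, the g-formula and the weighting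
representation coincide as observed-data functionals. -/
theorem g_formula_eq_weighting
    {𝒳 𝒯 : Type*} [Fintype Ω] [Fintype 𝒳] [Fintype 𝒯]
    (P : Ω → ℝ) (hP0 : ∀ ω, 0 ≤ P ω) (hP1 : ∑ ω, P ω = 1)
    (X : Ω → 𝒳) (A : Ω → 𝒯) (Y : Ω → ℝ) (R : Ω → Bool) (a : 𝒯)
    -- positivity
    (hposT : 0 < pr P (fun ω => R ω = false))
    (hpos : ∀ x, 0 < pr P (fun ω => X ω = x) →
      0 < pr P (fun ω => A ω = a ∧ X ω = x ∧ R ω = true)) :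
    ∑ x ∈ Finset.univ.filter
          (fun x => 0 < pr P (fun ω => X ω = x ∧ R ω = false)),
        cpr P (fun ω => X ω = x) (fun ω => R ω = false)
          * cex P Y (fun ω => X ω = x ∧ A ω = a ∧ R ω = true)
      = (pr P (fun ω => R ω = false))⁻¹
          * ex P (fun ω =>
              (cpr P (fun ω' => R ω' = false) (fun ω' => X ω' = X ω)
                  * (if R ω = true ∧ A ω = a then (1 : ℝ) else 0)
                / (cpr P (fun ω' => A ω' = a) (fun ω' => X ω' = X ω ∧ R ω' = true)
                    * cpr P (fun ω' => R ω' = true) (fun ω' => X ω' = X ω)))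
              * Y ω) := by
  classical
  set S : 𝒳 → ℝ := fun x =>
    ∑ ω, if X ω = x ∧ A ω = a ∧ R ω = true then P ω * Y ω else 0 with hS
  set c : 𝒳 → ℝ := fun x =>
    pr P (fun ω => X ω = x ∧ R ω = false)
      / pr P (fun ω => X ω = x ∧ A ω = a ∧ R ω = true) with hc
  -- key per-term identity
  have key : ∀ x ω,
      (if X ω = x then
        P ω * ((cpr P (fun ω' => R ω' = false) (fun ω' => X ω' = X ω)
                  * (if R ω = true ∧ A ω = a then (1 : ℝ) else 0)
                / (cpr P (fun ω' => A ω' = a) (fun ω' => X ω' = X ω ∧ R ω' = true)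
                    * cpr P (fun ω' => R ω' = true) (fun ω' => X ω' = X ω)))
              * Y ω) else 0)
      = c x * (if X ω = x ∧ A ω = a ∧ R ω = true then P ω * Y ω else 0) := by
    intro x ω
    by_cases hx : X ω = x
    · simp only [hx, if_true]
      by_cases hra : R ω = true ∧ A ω = a
      · have hcond : X ω = x ∧ A ω = a ∧ R ω = true := ⟨hx, hra.2, hra.1⟩
        simp only [hcond, if_true, hra, mul_one]
        by_cases hPω : P ω = 0
        · simp [hPω]
        · have hPpos : 0 < P ω := lt_of_le_of_ne (hP0 ω) (Ne.symm hPω)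
          have hpX : 0 < pr P (fun ω' => X ω' = x) :=
            lt_of_lt_of_le hPpos (le_pr P hP0 ω hx)
          have hpA : 0 < pr P (fun ω' => A ω' = a ∧ X ω' = x ∧ R ω' = true) :=
            hpos x hpX
          have hpXR : 0 < pr P (fun ω' => X ω' = x ∧ R ω' = true) :=
            lt_of_lt_of_le hpA (pr_mono P hP0 (fun ω' h => ⟨h.2.1, h.2.2⟩))
          have e1 : pr P (fun ω' => (R ω' = false) ∧ X ω' = x)
              = pr P (fun ω' => X ω' = x ∧ R ω' = false) :=
            pr_congr P (fun ω' => by tauto)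
          have e2 : pr P (fun ω' => (A ω' = a) ∧ (X ω' = x ∧ R ω' = true))
              = pr P (fun ω' => A ω' = a ∧ X ω' = x ∧ R ω' = true) :=
            pr_congr P (fun ω' => by tauto)
          have e3 : pr P (fun ω' => (R ω' = true) ∧ X ω' = x)
              = pr P (fun ω' => X ω' = x ∧ R ω' = true) :=
            pr_congr P (fun ω' => by tauto)
          have e6 : pr P (fun ω' => X ω' = x ∧ A ω' = a ∧ R ω' = true)
              = pr P (fun ω' => A ω' = a ∧ X ω' = x ∧ R ω' = true) :=
            pr_congr P (fun ω' => by tauto)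
          simp only [cpr, hc, e1, e2, e3, e6, and_self, if_true, mul_one, true_and]
          field_simp
          try ring
      · have hcond : ¬(A ω = a ∧ R ω = true) := fun h => hra ⟨h.2, h.1⟩
        simp [hra, hcond]
    · have hcond : ¬(X ω = x ∧ A ω = a ∧ R ω = true) := fun h => hx h.1
      simp [hx, hcond]
  -- rewrite RHS expectation as a sum over x
  have hex : ex P (fun ω =>
      (cpr P (fun ω' => R ω' = false) (fun ω' => X ω' = X ω)
          * (if R ω = true ∧ A ω = a then (1 : ℝ) else 0)
        / (cpr P (fun ω' => A ω' = a) (fun ω' => X ω' = X ω ∧ R ω' = true)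
            * cpr P (fun ω' => R ω' = true) (fun ω' => X ω' = X ω)))
      * Y ω) = ∑ x, c x * S x := by
    rw [ex]
    have : ∀ ω, P ω * ((cpr P (fun ω' => R ω' = false) (fun ω' => X ω' = X ω)
          * (if R ω = true ∧ A ω = a then (1 : ℝ) else 0)
        / (cpr P (fun ω' => A ω' = a) (fun ω' => X ω' = X ω ∧ R ω' = true)
            * cpr P (fun ω' => R ω' = true) (fun ω' => X ω' = X ω)))
      * Y ω) = ∑ x, (if X ω = x then P ω * ((cpr P (fun ω' => R ω' = false) (fun ω' => X ω' = X ω)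
          * (if R ω = true ∧ A ω = a then (1 : ℝ) else 0)
        / (cpr P (fun ω' => A ω' = a) (fun ω' => X ω' = X ω ∧ R ω' = true)
            * cpr P (fun ω' => R ω' = true) (fun ω' => X ω' = X ω)))
      * Y ω) else 0) := by
      intro ω
      rw [Finset.sum_ite_eq univ (X ω) (fun _ => _)]
      simp
    calc ∑ ω, P ω * _ = ∑ ω, ∑ x, (if X ω = x then _ else 0) :=
          Finset.sum_congr rfl fun ω _ => this ω
      _ = ∑ x, ∑ ω, (if X ω = x then _ else 0) := Finset.sum_comm
      _ = ∑ x, c x * S x := by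
          refine Finset.sum_congr rfl fun x _ => ?_
          rw [hS, Finset.mul_sum]
          exact Finset.sum_congr rfl fun ω _ => key x ω
  rw [hex, Finset.mul_sum]
  -- now handle LHS
  rw [Finset.sum_filter]
  refine Finset.sum_congr rfl fun x _ => ?_
  by_cases hx : 0 < pr P (fun ω => X ω = x ∧ R ω = false)
  · simp only [hx, if_true, cpr, cex, hc, hS]
    ring
  · have h0 : pr P (fun ω => X ω = x ∧ R ω = false) = 0 :=
      le_antisymm (not_lt.mp hx) (pr_nonneg P hP0 _)
    simp [hx, hc, h0]
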